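/- Fix n ≥ 2 and for 1 ≤ i < j ≤ n set I_i^j = {i, i+1, …, j−1}. The linear map which sends a symmetric matrix K ∈ ℝ^{n×n} with all row sums equal to zero to the vector ( M_{i,j} )_{1≤i<j≤n}, where M_{i,j} = Σ_{u∈I_i^j} Σ_{v∈{1,…,n}∖I_i^j} K_{uv}, is surjective onto ℝ^{n(n−1)/2}: for every family of reals (t_{ij})_{1≤i<j≤n} there exists such a matrix K with M_{i,j} = t_{ij} for all 1 ≤ i < j ≤ n. -/

import Mathlib

namespace MomentumAux

open Finset

variable (n : ℕ) (t : Fin n → Fin n → ℝ)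

/-- Extension of `t/2` to natural number indices with suitable boundary values. -/
noncomputable def G (a b : ℕ) : ℝ :=
  if h : a < b ∧ b < n then t ⟨a, h.1.trans h.2⟩ ⟨b, h.2⟩ / 2
  else if h2 : 0 < a ∧ a < b ∧ b = n then
    t ⟨0, lt_of_le_of_lt (Nat.zero_le a) (h2.2.2 ▸ h2.2.1)⟩ ⟨a, h2.2.2 ▸ h2.2.1⟩ / 2
  else 0

/-- Second difference of `G`. -/
noncomputable def c (a b : ℕ) : ℝ :=
  G n t a b - G n t (a+1) b - G n t a (b+1) + G n t (a+1) (b+1)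

/-- Off-diagonal part of the matrix, as a function of natural indices. -/
noncomputable def Anat (a b : ℕ) : ℝ :=
  if a < b then c n t a b else if b < a then c n t b a else 0

lemma G_self (a : ℕ) : G n t a a = 0 := by
  unfold G
  split_ifs with h1 h2
  · exact absurd h1.1 (lt_irrefl a)
  · exact absurd h2.2.1 (lt_irrefl a)
  · rfl

lemma tele (f : ℕ → ℝ) (p q : ℕ) (h : p ≤ q) :
    ∑ a ∈ Ico p q, (f a - f (a+1)) = f p - f q := by
  induction q, h using Nat.le_induction with
  | base => simp
  | succ q hq ih =>
      rw [Finset.sum_Ico_succ_top hq, ih]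
      ring

lemma sum_c_snd (w p q : ℕ) (h : p ≤ q) :
    ∑ x ∈ Ico p q, c n t w x =
      (G n t w p - G n t (w+1) p) - (G n t w q - G n t (w+1) q) := by
  rw [← tele (fun x => G n t w x - G n t (w+1) x) p q h]
  refine Finset.sum_congr rfl fun x _ => ?_
  simp only [c]
  ring

end MomentumAux

open MomentumAux Finset in
/-- The linear map sending a symmetric `n × n` matrix `K` with zero row sums to the
vector `(M_{i,j})_{i<j}`, where `M_{i,j} = Σ_{u∈I_i^j} Σ_{v∉I_i^j} K_{uv}` and
`I_i^j = {i,…,j−1}`, is surjective: every target family `(t_{ij})_{i<j}` is attained. -/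
theorem momentum_map_surjective (n : ℕ) (hn : 2 ≤ n) (t : Fin n → Fin n → ℝ) :
    ∃ K : Matrix (Fin n) (Fin n) ℝ,
      K.IsSymm ∧ (∀ a, ∑ b, K a b = 0) ∧
      ∀ i j : Fin n, i < j →
        ∑ u ∈ Finset.Ico i j, ∑ v ∈ Finset.univ \ Finset.Ico i j, K u v = t i j := by
  classical
  -- symmetry of `Anat`
  have hAsymm : ∀ a b : ℕ, Anat n t a b = Anat n t b a := by
    intro a b
    unfold Anat
    rcases lt_trichotomy a b with h | h | h
    · rw [if_pos h, if_neg (by omega), if_pos h]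
    · subst h; simp
    · rw [if_neg (by omega), if_pos h, if_pos h]
  refine ⟨fun u v => Anat n t u v + (if u = v then -(∑ w : Fin n, Anat n t u w) else 0),
    ?_, ?_, ?_⟩
  · -- symmetric
    ext u v
    show Anat n t v u + (if v = u then -(∑ w : Fin n, Anat n t v w) else 0) = Anat n t u v + (if u = v then -(∑ w : Fin n, Anat n t u w) else 0)
    by_cases h : u = v
    · subst h; rfl
    · rw [if_neg h, if_neg (Ne.symm h), hAsymm]
  · -- zero row sums
    intro a
    rw [Finset.sum_add_distrib, Finset.sum_ite_eq]
    simp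
  · -- the main computation
    intro i j hij
    have hji : (i : ℕ) < (j : ℕ) := hij
    have hjn : (j : ℕ) < n := j.isLt
    -- complement splits
    have hcompl : (univ \ Ico i j : Finset (Fin n)) = Iio i ∪ Ici j := by
      ext v
      simp only [mem_sdiff, mem_univ, true_and, mem_Ico, mem_union, mem_Iio, mem_Ici,
        Fin.lt_iff_val_lt_val, Fin.le_iff_val_le_val, not_and, not_lt]
      omega
    have hdisj : Disjoint (Iio i) (Ici j : Finset (Fin n)) := by
      simp only [Finset.disjoint_left, mem_Iio, mem_Ici, Fin.lt_iff_val_lt_val,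
        Fin.le_iff_val_le_val]
      intro v hv hv'
      omega
    rw [hcompl]
    -- replace K by Anat on off-diagonal sets
    have step1 : ∀ u ∈ Ico i j,
        (∑ v ∈ Iio i ∪ Ici j,
          (Anat n t u v + (if u = v then -(∑ w : Fin n, Anat n t u w) else 0)))
        = ∑ v ∈ Iio i, Anat n t (u:ℕ) v + ∑ v ∈ Ici j, Anat n t (u:ℕ) v := by
      intro u hu
      rw [mem_Ico] at hu
      have : ∀ v ∈ Iio i ∪ Ici j,
          (Anat n t u v + (if u = v then -(∑ w : Fin n, Anat n t u w) else 0))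
          = Anat n t (u:ℕ) (v:ℕ) := by
        intro v hv
        rw [mem_union, mem_Iio, mem_Ici] at hv
        have huv : u ≠ v := by
          rcases hv with hv | hv
          · exact fun h => absurd (h ▸ hu.1) (not_le.mpr hv)
          · exact fun h => absurd (h ▸ hu.2) (not_lt.mpr hv)
        rw [if_neg huv, add_zero]
      rw [Finset.sum_congr rfl this, Finset.sum_union hdisj]
    rw [Finset.sum_congr rfl step1]
    -- convert to natural-number sums
    have convIco : ∀ f : ℕ → ℝ, ∑ u ∈ Ico i j, f (u : ℕ) = ∑ a ∈ Ico (i:ℕ) (j:ℕ), f a := by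
      intro f
      rw [← Fin.map_valEmbedding_Ico, Finset.sum_map]
      rfl
    have convIio : ∀ f : ℕ → ℝ, ∑ v ∈ Iio i, f (v : ℕ) = ∑ a ∈ Ico 0 (i:ℕ), f a := by
      intro f
      rw [Nat.Ico_zero_eq_range, ← Nat.Iio_eq_range, ← Fin.map_valEmbedding_Iio,
        Finset.sum_map]
      rfl
    have convIci : ∀ f : ℕ → ℝ, ∑ v ∈ Ici j, f (v : ℕ) = ∑ a ∈ Ico (j:ℕ) n, f a := by
      intro f
      have hn1 : Ico (j:ℕ) n = Icc (j:ℕ) (n-1) := by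
        rw [← Finset.Ico_add_one_right_eq_Icc]
        congr 1
        omega
      rw [← Fin.map_valEmbedding_Ici, Finset.sum_map]
      rfl
    rw [convIco (fun a => ∑ v ∈ Iio i, Anat n t a v + ∑ v ∈ Ici j, Anat n t a v)]
    have inner : ∀ a ∈ Ico (i:ℕ) (j:ℕ),
        (∑ v ∈ Iio i, Anat n t a v + ∑ v ∈ Ici j, Anat n t a v)
        = ∑ b ∈ Ico 0 (i:ℕ), c n t b a + ∑ b ∈ Ico (j:ℕ) n, c n t a b := by
      intro a ha
      rw [mem_Ico] at ha
      rw [convIio (fun b => Anat n t a b), convIci (fun b => Anat n t a b)]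
      congr 1
      · refine Finset.sum_congr rfl fun b hb => ?_
        rw [mem_Ico] at hb
        unfold Anat
        rw [if_neg (by omega), if_pos (by omega)]
      · refine Finset.sum_congr rfl fun b hb => ?_
        rw [mem_Ico] at hb
        unfold Anat
        rw [if_pos (by omega)]
    rw [Finset.sum_congr rfl inner, Finset.sum_add_distrib]
    -- first double sum: swap order and telescope
    rw [Finset.sum_comm]
    have s1 : ∑ b ∈ Ico 0 (i:ℕ), ∑ a ∈ Ico (i:ℕ) (j:ℕ), c n t b a
        = (G n t 0 (i:ℕ) - G n t 0 (j:ℕ)) - (G n t (i:ℕ) (i:ℕ) - G n t (i:ℕ) (j:ℕ)) := by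
      have : ∀ b ∈ Ico 0 (i:ℕ), ∑ a ∈ Ico (i:ℕ) (j:ℕ), c n t b a
          = (fun b => G n t b (i:ℕ) - G n t b (j:ℕ)) b
            - (fun b => G n t b (i:ℕ) - G n t b (j:ℕ)) (b+1) := by
        intro b _
        rw [sum_c_snd n t b (i:ℕ) (j:ℕ) (le_of_lt hji)]
        ring
      rw [Finset.sum_congr rfl this, tele _ 0 (i:ℕ) (Nat.zero_le _)]
    have s2 : ∑ a ∈ Ico (i:ℕ) (j:ℕ), ∑ b ∈ Ico (j:ℕ) n, c n t a b
        = (G n t (i:ℕ) (j:ℕ) - G n t (i:ℕ) n) - (G n t (j:ℕ) (j:ℕ) - G n t (j:ℕ) n) := by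
      have : ∀ a ∈ Ico (i:ℕ) (j:ℕ), ∑ b ∈ Ico (j:ℕ) n, c n t a b
          = (fun a => G n t a (j:ℕ) - G n t a n) a
            - (fun a => G n t a (j:ℕ) - G n t a n) (a+1) := by
        intro a _
        rw [sum_c_snd n t a (j:ℕ) n (le_of_lt hjn)]
        ring
      rw [Finset.sum_congr rfl this, tele _ (i:ℕ) (j:ℕ) (le_of_lt hji)]
    rw [s1, s2, G_self, G_self]
    -- boundary values
    have hGij : G n t (i:ℕ) (j:ℕ) = t i j / 2 := by
      unfold G
      rw [dif_pos ⟨hji, hjn⟩]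
    have hGin : G n t (i:ℕ) n = G n t 0 (i:ℕ) := by
      by_cases hi : (i:ℕ) = 0
      · rw [hi]
        unfold G
        rw [dif_neg (by omega), dif_neg (by omega), dif_neg (by omega), dif_neg (by omega)]
      · unfold G
        rw [dif_neg (by omega), dif_pos ⟨by omega, i.isLt, rfl⟩,
          dif_pos ⟨by omega, i.isLt⟩]
    have hGjn : G n t (j:ℕ) n = G n t 0 (j:ℕ) := by
      have hj0 : 0 < (j:ℕ) := by omega
      unfold G
      rw [dif_neg (by omega), dif_pos ⟨hj0, j.isLt, rfl⟩, dif_pos ⟨hj0, j.isLt⟩]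
    rw [hGij, hGin, hGjn]
    ring
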